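/- Let G be a finite simple bipartite graph with parts A and B such that every vertex of A has degree 3 and every vertex of B has degree 2, and let n = |A|. Then there exists a subset B' ⊆ B whose vertices have pairwise disjoint neighborhoods in G and with |B'| ≥ 2n/5. (This is the multigraph version of the statement that every 3-regular multigraph on n vertices has a matching of size at least 2n/5, encoded via the bipartite incidence graph.) -/

import Mathlib

open Finset

/-- The vertices of `B'` have pairwise disjoint neighborhoods in `G`. -/
def PDisjNbrs {V : Type*} (G : SimpleGraph V) (B' : Finset V) : Prop :=
  ∀ b₁ ∈ B', ∀ b₂ ∈ B', b₁ ≠ b₂ → ∀ a, ¬(G.Adj a b₁ ∧ G.Adj a b₂)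

/-- `N(S)`: the vertices of `A` adjacent to at least one vertex of `S`. -/
def nbhd {V : Type*} [DecidableEq V] (G : SimpleGraph V) [DecidableRel G.Adj]
    (A S : Finset V) : Finset V :=
  A.filter fun a => ∃ b ∈ S, G.Adj a b

/-- The bipartite subgraph of `G` induced on `A ∪ C` contains a matching saturating
every vertex of `A`, encoded by an injective choice of partners. -/
def SatMatch {V : Type*} (G : SimpleGraph V) (A C : Finset V) : Prop :=
  ∃ f : V → V, Set.InjOn f ↑A ∧ ∀ a ∈ A, f a ∈ C ∧ G.Adj a (f a)

set_option linter.unusedSectionVars false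

namespace TBaux

variable {V : Type*} [DecidableEq V] [Fintype V]

section Reach

variable (R : V → V → Prop)

/-- reachability within a finite set `W`. -/
def Rch (W : Finset V) (x y : V) : Prop :=
  Relation.ReflTransGen (fun a b => b ∈ W ∧ R a b) x y

open Classical in
/-- the connected component of `x` inside `W`. -/
noncomputable def comp (W : Finset V) (x : V) : Finset V :=
  W.filter (fun y => Rch R W x y)

/-- the set of connected components of `W`. -/
noncomputable def comps (W : Finset V) : Finset (Finset V) :=
  W.image (comp R W)

/-- number of odd components of `W`. -/
noncomputable def oddc (W : Finset V) : ℕ :=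
  ((comps R W).filter (fun s => s.card % 2 = 1)).card

variable {R}

lemma rch_refl (W : Finset V) (x : V) : Rch R W x x := Relation.ReflTransGen.refl

lemma rch_trans {W : Finset V} {x y z : V} (h1 : Rch R W x y) (h2 : Rch R W y z) :
    Rch R W x z := Relation.ReflTransGen.trans h1 h2

lemma rch_mem {W : Finset V} {x y : V} (hx : x ∈ W) (h : Rch R W x y) : y ∈ W := by
  induction h with
  | refl => exact hx
  | tail _ h2 _ => exact h2.1

lemma rch_mono {W W' : Finset V} (hWW : W ⊆ W') {x y : V} (h : Rch R W x y) :
    Rch R W' x y := by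
  induction h with
  | refl => exact Relation.ReflTransGen.refl
  | tail _ h2 ih => exact ih.tail ⟨hWW h2.1, h2.2⟩

variable (hsym : ∀ x y, R x y → R y x)
include hsym

lemma rch_symm {W : Finset V} {x y : V} (hx : x ∈ W) (h : Rch R W x y) :
    Rch R W y x := by
  induction h with
  | refl => exact Relation.ReflTransGen.refl
  | tail h1 h2 ih =>
      exact Relation.ReflTransGen.head ⟨rch_mem hx h1, hsym _ _ h2.2⟩ ih

end Reach

section Comp

variable {R : V → V → Prop} (hsym : ∀ x y, R x y → R y x)

lemma mem_comp {W : Finset V} {x y : V} : y ∈ comp R W x ↔ y ∈ W ∧ Rch R W x y := by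
  classical
  simp [comp]

lemma comp_subset {W : Finset V} {x : V} : comp R W x ⊆ W := by
  intro y hy; exact (mem_comp.1 hy).1

lemma mem_comp_self {W : Finset V} {x : V} (hx : x ∈ W) : x ∈ comp R W x :=
  mem_comp.2 ⟨hx, rch_refl W x⟩

lemma comp_closed {W : Finset V} {x a y : V} (ha : a ∈ comp R W x) (hy : y ∈ W)
    (hR : R a y) : y ∈ comp R W x := by
  rcases mem_comp.1 ha with ⟨_, hr⟩
  exact mem_comp.2 ⟨hy, hr.tail ⟨hy, hR⟩⟩

include hsym

lemma comp_eq_of_mem {W : Finset V} {x y : V} (hx : x ∈ W) (hy : y ∈ comp R W x) :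
    comp R W y = comp R W x := by
  rcases mem_comp.1 hy with ⟨hyW, hxy⟩
  ext z
  simp only [mem_comp]
  constructor
  · rintro ⟨hz, hyz⟩; exact ⟨hz, rch_trans hxy hyz⟩
  · rintro ⟨hz, hxz⟩; exact ⟨hz, rch_trans (rch_symm hsym hx hxy) hxz⟩

lemma mem_comps {W : Finset V} {s : Finset V} :
    s ∈ comps R W ↔ ∃ x ∈ W, comp R W x = s := by
  classical
  simp [comps]

lemma comps_nonempty {W : Finset V} {s : Finset V} (hs : s ∈ comps R W) : s.Nonempty := by
  rcases (mem_comps hsym).1 hs with ⟨x, hx, rfl⟩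
  exact ⟨x, mem_comp_self hx⟩

lemma comps_disjoint {W : Finset V} {s t : Finset V} (hs : s ∈ comps R W)
    (ht : t ∈ comps R W) (hst : s ≠ t) : Disjoint s t := by
  rcases (mem_comps hsym).1 hs with ⟨x, hx, rfl⟩
  rcases (mem_comps hsym).1 ht with ⟨y, hy, rfl⟩
  rw [Finset.disjoint_left]
  intro a ha ha'
  exact hst ((comp_eq_of_mem hsym hx ha).symm.trans (comp_eq_of_mem hsym hy ha'))

lemma sum_comps (W : Finset V) : ∑ s ∈ comps R W, s.card = W.card := by
  classical
  rw [Finset.card_eq_sum_card_fiberwise (f := comp R W) (t := comps R W)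
    (fun x hx => Finset.mem_image_of_mem _ hx)]
  apply Finset.sum_congr rfl
  intro s hs
  congr 1
  rcases (mem_comps hsym).1 hs with ⟨x, hx, rfl⟩
  ext y
  simp only [Finset.mem_filter]
  constructor
  · intro hy
    exact ⟨comp_subset hy, comp_eq_of_mem hsym hx hy⟩
  · rintro ⟨hyW, hcomp⟩
    rw [← hcomp]; exact mem_comp_self hyW

end Comp

end TBaux
namespace TBaux

variable {V : Type*} [DecidableEq V] [Fintype V]
variable {R : V → V → Prop} (hsym : ∀ x y, R x y → R y x)

/-- parity of a sum of naturals equals parity of the number of odd terms. -/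
lemma sum_parity {ι : Type*} [DecidableEq ι] (F : Finset ι) (f : ι → ℕ) :
    (∑ s ∈ F, f s) % 2 = (F.filter (fun s => f s % 2 = 1)).card % 2 := by
  classical
  induction F using Finset.induction_on with
  | empty => simp
  | @insert a F ha ih =>
      rw [Finset.sum_insert ha, Finset.filter_insert]
      by_cases h : f a % 2 = 1
      · rw [if_pos h, Finset.card_insert_of_notMem (fun hc => ha (Finset.mem_filter.1 hc).1)]
        omega
      · rw [if_neg h]
        omega

lemma rch_stays {U U₁ : Finset V} (hcl : ∀ x ∈ U₁, ∀ y ∈ U, R x y → y ∈ U₁)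
    {x z : V} (hx : x ∈ U₁) (hr : Rch R U x z) : z ∈ U₁ := by
  induction hr with
  | refl => exact hx
  | tail h1 h2 ih => exact hcl _ ih _ h2.1 h2.2

include hsym

lemma oddc_parity (W : Finset V) : oddc R W % 2 = W.card % 2 := by
  rw [oddc, ← sum_parity (comps R W) (fun s => s.card), sum_comps hsym]

lemma oddc_pos_of_odd {W : Finset V} (h : W.card % 2 = 1) : 1 ≤ oddc R W := by
  have := oddc_parity hsym (R := R) W
  omega

/-- if `U'` is a closed subset of `U`, components of elements of `U'` agree. -/
lemma comp_eq_of_closed {U U' : Finset V} (hsub : U' ⊆ U)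
    (hcl : ∀ x ∈ U', ∀ y ∈ U, R x y → y ∈ U') {x : V} (hx : x ∈ U') :
    comp R U' x = comp R U x := by
  ext y
  simp only [mem_comp]
  constructor
  · rintro ⟨hy, hr⟩
    exact ⟨hsub hy, rch_mono hsub hr⟩
  · rintro ⟨hy, hr⟩
    suffices h : ∀ z, Rch R U x z → z ∈ U' ∧ Rch R U' x z from
      ⟨(h y hr).1, (h y hr).2⟩
    intro z hz
    induction hz with
    | refl => exact ⟨hx, rch_refl _ _⟩
    | tail h1 h2 ih =>
        refine ⟨hcl _ ih.1 _ h2.1 h2.2, ih.2.tail ⟨hcl _ ih.1 _ h2.1 h2.2, h2.2⟩⟩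

/-- a connected, closed subset is a component of any larger ambient set. -/
lemma comp_eq_of_closed' {U U' : Finset V} (hUU' : U ⊆ U') {x : V} (hx : x ∈ U)
    (hcl : ∀ a ∈ comp R U x, ∀ y ∈ U', R a y → y ∈ comp R U x) :
    comp R U' x = comp R U x := by
  ext y
  simp only [mem_comp]
  constructor
  · rintro ⟨hy, hr⟩
    suffices h : ∀ z, Rch R U' x z → z ∈ comp R U x from mem_comp.1 (h y hr)
    intro z hz
    induction hz with
    | refl => exact mem_comp_self hx
    | tail h1 h2 ih => exact hcl _ ih _ h2.1 h2.2
  · rintro ⟨hy, hr⟩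
    exact ⟨hUU' hy, rch_mono hUU' hr⟩

lemma comps_of_closed {U U' : Finset V} (hsub : U' ⊆ U)
    (hcl : ∀ x ∈ U', ∀ y ∈ U, R x y → y ∈ U') :
    comps R U' = (comps R U).filter (fun s => s ⊆ U') := by
  classical
  ext s
  simp only [Finset.mem_filter, mem_comps hsym]
  constructor
  · rintro ⟨x, hx, rfl⟩
    rw [comp_eq_of_closed hsym hsub hcl hx]
    exact ⟨⟨x, hsub hx, rfl⟩, by rw [← comp_eq_of_closed hsym hsub hcl hx]; exact comp_subset⟩
  · rintro ⟨⟨x, hx, rfl⟩, hsubU'⟩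
    have hx' : x ∈ U' := hsubU' (mem_comp_self hx)
    exact ⟨x, hx', by rw [comp_eq_of_closed hsym hsub hcl hx']⟩

lemma oddc_of_closed {U U' : Finset V} (hsub : U' ⊆ U)
    (hcl : ∀ x ∈ U', ∀ y ∈ U, R x y → y ∈ U') :
    oddc R U' = ((comps R U).filter (fun s => s ⊆ U' ∧ s.card % 2 = 1)).card := by
  classical
  rw [oddc, comps_of_closed hsym hsub hcl, Finset.filter_filter]

/-- components split across a separation. -/
lemma oddc_split {U U₁ U₂ : Finset V} (hU : U = U₁ ∪ U₂) (hdisj : Disjoint U₁ U₂)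
    (hnE : ∀ x ∈ U₁, ∀ y ∈ U₂, ¬R x y) :
    oddc R U = oddc R U₁ + oddc R U₂ := by
  classical
  have hsub1 : U₁ ⊆ U := by rw [hU]; exact Finset.subset_union_left
  have hsub2 : U₂ ⊆ U := by rw [hU]; exact Finset.subset_union_right
  have hcl1 : ∀ x ∈ U₁, ∀ y ∈ U, R x y → y ∈ U₁ := by
    intro x hx y hy hR
    rcases Finset.mem_union.1 (hU ▸ hy) with h | h
    · exact h
    · exact absurd hR (hnE x hx y h)
  have hcl2 : ∀ x ∈ U₂, ∀ y ∈ U, R x y → y ∈ U₂ := by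
    intro x hx y hy hR
    rcases Finset.mem_union.1 (hU ▸ hy) with h | h
    · exact absurd (hsym _ _ hR) (hnE y h x hx)
    · exact h
  rw [oddc_of_closed hsym hsub1 hcl1, oddc_of_closed hsym hsub2 hcl2, oddc]
  rw [← Finset.card_union_of_disjoint]
  · congr 1
    rw [← Finset.filter_or]
    apply Finset.filter_congr
    intro s hs
    have hne := comps_nonempty hsym hs
    have : s ⊆ U₁ ∨ s ⊆ U₂ := by
      rcases (mem_comps hsym).1 hs with ⟨x, hx, rfl⟩
      rcases Finset.mem_union.1 (hU ▸ hx) with h | h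
      · exact Or.inl (fun z hz => rch_stays hcl1 h (mem_comp.1 hz).2)
      · exact Or.inr (fun z hz => rch_stays hcl2 h (mem_comp.1 hz).2)
    constructor
    · intro h1
      rcases this with h | h
      · exact Or.inl ⟨h, h1⟩
      · exact Or.inr ⟨h, h1⟩
    · rintro (⟨_, h1⟩ | ⟨_, h1⟩) <;> exact h1
  · rw [Finset.disjoint_left]
    rintro s hs1 hs2
    simp only [Finset.mem_filter] at hs1 hs2
    have hne := comps_nonempty hsym hs1.1
    rcases hne with ⟨z, hz⟩
    exact Finset.disjoint_left.1 hdisj (hs1.2.1 hz) (hs2.2.1 hz)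

/-- removing a whole component. -/
lemma oddc_sdiff_comp {U C : Finset V} (hC : C ∈ comps R U) :
    oddc R (U \ C) + (if C.card % 2 = 1 then 1 else 0) = oddc R U := by
  classical
  have hsub : U \ C ⊆ U := Finset.sdiff_subset
  have hcl : ∀ x ∈ U \ C, ∀ y ∈ U, R x y → y ∈ U \ C := by
    intro x hx y hy hR
    rcases Finset.mem_sdiff.1 hx with ⟨hxU, hxC⟩
    refine Finset.mem_sdiff.2 ⟨hy, fun hyC => hxC ?_⟩
    rcases (mem_comps hsym).1 hC with ⟨w, hw, rfl⟩
    exact comp_closed hyC hxU (hsym _ _ hR)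
  rw [oddc_of_closed hsym hsub hcl, oddc]
  have hkey : (comps R U).filter (fun s => s ⊆ U \ C ∧ s.card % 2 = 1) =
      ((comps R U).filter (fun s => s.card % 2 = 1)).erase C := by
    ext s
    simp only [Finset.mem_filter, Finset.mem_erase]
    constructor
    · rintro ⟨hs, hsub', hodd⟩
      refine ⟨fun hEq => ?_, hs, hodd⟩
      subst hEq
      rcases comps_nonempty hsym hs with ⟨z, hz⟩
      exact (Finset.mem_sdiff.1 (hsub' hz)).2 hz
    · rintro ⟨hne, hs, hodd⟩
      have hdisj := comps_disjoint hsym hs hC hne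
      refine ⟨hs, fun z hz => Finset.mem_sdiff.2
        ⟨?_, fun hzC => Finset.disjoint_left.1 hdisj hz hzC⟩, hodd⟩
      rcases (mem_comps hsym).1 hs with ⟨x, hx, hEq⟩
      rw [← hEq] at hz
      exact comp_subset hz
  rw [hkey]
  by_cases hodd : C.card % 2 = 1
  · rw [if_pos hodd,
      Finset.card_erase_of_mem (Finset.mem_filter.2 ⟨hC, hodd⟩)]
    have hpos : 0 < ((comps R U).filter (fun s => s.card % 2 = 1)).card :=
      Finset.card_pos.2 ⟨C, Finset.mem_filter.2 ⟨hC, hodd⟩⟩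
    omega
  · have hCnot : C ∉ (comps R U).filter (fun s => s.card % 2 = 1) :=
      fun h => hodd (Finset.mem_filter.1 h).2
    rw [if_neg hodd, Finset.erase_eq_of_notMem hCnot, add_zero]

end TBaux
namespace TBaux

variable {V : Type*} [DecidableEq V] [Fintype V]
variable {R : V → V → Prop}

/-- the property of being a partial matching on `K` (with respect to `R`). -/
def IsM (R : V → V → Prop) (K : Finset V) (φ : V → V) : Prop :=
  ∀ x ∈ K, φ x ∈ K ∧ φ (φ x) = x ∧ R x (φ x)

lemma fold_matching (X : Finset (Finset V)) (dom : Finset V → Finset V)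
    (τ : Finset V → ℕ)
    (hdisj : ∀ C ∈ X, ∀ C' ∈ X, C ≠ C' → Disjoint (dom C) (dom C'))
    (hex : ∀ C ∈ X, ∃ K φ, K ⊆ dom C ∧ IsM R K φ ∧ τ C ≤ K.card) :
    ∃ K φ, K ⊆ X.biUnion dom ∧ IsM R K φ ∧ ∑ C ∈ X, τ C ≤ K.card := by
  classical
  induction X using Finset.induction_on with
  | empty => exact ⟨∅, id, by simp, fun x hx => absurd hx (Finset.notMem_empty x), by simp⟩
  | @insert C X hC ih =>
      obtain ⟨K₁, φ₁, hK₁sub, hK₁m, hK₁c⟩ := hex C (Finset.mem_insert_self C X)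
      obtain ⟨K₂, φ₂, hK₂sub, hK₂m, hK₂c⟩ := ih
        (fun a ha b hb hab => hdisj a (Finset.mem_insert_of_mem ha) b
          (Finset.mem_insert_of_mem hb) hab)
        (fun a ha => hex a (Finset.mem_insert_of_mem ha))
      have hdisj12 : Disjoint K₁ K₂ := by
        apply Finset.disjoint_left.2
        intro a ha1 ha2
        obtain ⟨C', hC', haC'⟩ := Finset.mem_biUnion.1 (hK₂sub ha2)
        have hne : C ≠ C' := fun h => hC (h ▸ hC')
        exact Finset.disjoint_left.1
          (hdisj C (Finset.mem_insert_self C X) C' (Finset.mem_insert_of_mem hC') hne)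
          (hK₁sub ha1) haC'
      refine ⟨K₁ ∪ K₂, fun x => if x ∈ K₁ then φ₁ x else φ₂ x, ?_, ?_, ?_⟩
      · intro a ha
        rcases Finset.mem_union.1 ha with h | h
        · exact Finset.mem_biUnion.2 ⟨C, Finset.mem_insert_self C X, hK₁sub h⟩
        · obtain ⟨C', hC', haC'⟩ := Finset.mem_biUnion.1 (hK₂sub h)
          exact Finset.mem_biUnion.2 ⟨C', Finset.mem_insert_of_mem hC', haC'⟩
      · intro x hx
        dsimp only
        rcases Finset.mem_union.1 hx with h | h
        · obtain ⟨h1, h2, h3⟩ := hK₁m x h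
          rw [if_pos h]
          refine ⟨Finset.mem_union_left _ h1, ?_, h3⟩
          rw [if_pos h1, h2]
        · obtain ⟨h1, h2, h3⟩ := hK₂m x h
          have hx1 : x ∉ K₁ := fun hc => Finset.disjoint_left.1 hdisj12 hc h
          have hφ1 : φ₂ x ∉ K₁ := fun hc => Finset.disjoint_left.1 hdisj12 hc h1
          rw [if_neg hx1]
          refine ⟨Finset.mem_union_right _ h1, ?_, h3⟩
          rw [if_neg hφ1, h2]
      · rw [Finset.sum_insert hC, Finset.card_union_of_disjoint hdisj12]
        omega

end TBaux
namespace TBaux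

variable {V : Type*} [DecidableEq V] [Fintype V]
variable {R : V → V → Prop}

theorem tb (hsym : ∀ x y, R x y → R y x) :
    ∀ (N : ℕ) (W : Finset V), W.card ≤ N → ∀ D : ℕ,
      (∀ S ⊆ W, oddc R (W \ S) ≤ S.card + D) →
      ∃ K φ, K ⊆ W ∧ IsM R K φ ∧ W.card ≤ K.card + D := by
  intro N
  induction N with
  | zero =>
      intro W hW D _
      exact ⟨∅, id, by simp, fun x hx => absurd hx (Finset.notMem_empty x), by omega⟩
  | succ N ih =>
    intro W hWcard D hyp
    classical
    -- choose a maximizer T of the deficiency functional, of largest cardinality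
    set val : Finset V → ℕ := fun S => oddc R (W \ S) + (W \ S).card with hval_def
    obtain ⟨m, hmmem, hmax⟩ := Finset.exists_max_image W.powerset val
      ⟨∅, Finset.empty_mem_powerset W⟩
    set P := W.powerset.filter (fun S => val m ≤ val S) with hP
    obtain ⟨T, hTmem, hTmax⟩ := Finset.exists_max_image P Finset.card
      ⟨m, Finset.mem_filter.2 ⟨hmmem, le_refl _⟩⟩
    have hTW : T ⊆ W := Finset.mem_powerset.1 (Finset.mem_filter.1 hTmem).1
    have hvalT0 : ∀ S ⊆ W, val S ≤ val T :=
      fun S hS => le_trans (hmax S (Finset.mem_powerset.2 hS))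
        (Finset.mem_filter.1 hTmem).2
    have hcardT0 : ∀ S ⊆ W, val T ≤ val S → S.card ≤ T.card := by
      intro S hS hv
      exact hTmax S (Finset.mem_filter.2 ⟨Finset.mem_powerset.2 hS,
        le_trans (Finset.mem_filter.1 hTmem).2 hv⟩)
    set U : Finset V := W \ T with hU
    set X : Finset (Finset V) := comps R U with hX
    set q : ℕ := oddc R U with hq
    set t : ℕ := T.card with ht
    have hUW : U.card + t = W.card := Finset.card_sdiff_add_card_eq_card hTW
    have hUsubW : U ⊆ W := Finset.sdiff_subset
    have hvalTeq : val T = q + U.card := rfl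
    have hvalT : ∀ S ⊆ W, oddc R (W \ S) + (W \ S).card ≤ q + U.card := by
      intro S hS
      have h := hvalT0 S hS
      rw [hvalTeq] at h
      simpa only [hval_def] using h
    have hcardT : ∀ S ⊆ W, q + U.card ≤ oddc R (W \ S) + (W \ S).card →
        S.card ≤ t := by
      intro S hS hv
      refine hcardT0 S hS ?_
      rw [hvalTeq]
      simpa only [hval_def] using hv
    have hqt : t + oddc R W ≤ q := by
      have h0 := hvalT ∅ (Finset.empty_subset W)
      simp only [Finset.sdiff_empty] at h0
      omega
    set d : ℕ := q - t with hd
    have hdq : t + d = q := by omega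
    have hdD : d ≤ D := by
      have h := hyp T hTW
      rw [← hU] at h
      omega
    have hCsubU : ∀ C ∈ X, C ⊆ U := by
      intro C hC
      rcases (mem_comps hsym).1 hC with ⟨x, hx, rfl⟩
      exact comp_subset
    -- the key splitting identity
    have key : ∀ C ∈ X, ∀ Y ⊆ C,
        oddc R (U \ Y) + (if C.card % 2 = 1 then 1 else 0) = oddc R (C \ Y) + q := by
      intro C hC Y hY
      have hCU : C ⊆ U := hCsubU C hC
      have hsplit : U \ Y = (C \ Y) ∪ (U \ C) := by
        ext z
        simp only [Finset.mem_sdiff, Finset.mem_union]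
        constructor
        · rintro ⟨hzU, hzY⟩
          by_cases h : z ∈ C
          · exact Or.inl ⟨h, hzY⟩
          · exact Or.inr ⟨hzU, h⟩
        · rintro (⟨h1, h2⟩ | ⟨h1, h2⟩)
          · exact ⟨hCU h1, h2⟩
          · exact ⟨h1, fun hzY => h2 (hY hzY)⟩
      have hdisj : Disjoint (C \ Y) (U \ C) := by
        rw [Finset.disjoint_left]
        intro a ha ha'
        exact (Finset.mem_sdiff.1 ha').2 (Finset.mem_sdiff.1 ha).1
      have hnE : ∀ x ∈ C \ Y, ∀ y ∈ U \ C, ¬R x y := by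
        intro x hx y hy hR
        rcases (mem_comps hsym).1 hC with ⟨w, hw, hEq⟩
        have hxC : x ∈ comp R U w := by rw [hEq]; exact (Finset.mem_sdiff.1 hx).1
        have : y ∈ comp R U w := comp_closed hxC (Finset.mem_sdiff.1 hy).1 hR
        exact (Finset.mem_sdiff.1 hy).2 (hEq ▸ this)
      have h1 := oddc_split hsym hsplit hdisj hnE
      have h2 := oddc_sdiff_comp hsym hC
      omega
    -- every even component is "Tutte-tight"
    have claim_even : ∀ C ∈ X, C.card % 2 = 0 → ∀ S' ⊆ C,
        oddc R (C \ S') ≤ S'.card := by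
      intro C hC heven S' hS'
      by_contra hlt
      push_neg at hlt
      have hCU : C ⊆ U := hCsubU C hC
      have hS'U : S' ⊆ U := hS'.trans hCU
      have hTS'W : T ∪ S' ⊆ W := Finset.union_subset hTW (hS'U.trans hUsubW)
      have hWsd : W \ (T ∪ S') = U \ S' := by
        ext z
        simp only [hU, Finset.mem_sdiff, Finset.mem_union]
        tauto
      have hval' := hvalT (T ∪ S') hTS'W
      rw [hWsd] at hval'
      have hkey := key C hC S' hS'
      rw [if_neg (by omega)] at hkey
      have hc2 : (U \ S').card + S'.card = U.card :=
        Finset.card_sdiff_add_card_eq_card hS'U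
      omega
    -- near-perfect-matching condition inside odd components
    have claim_odd : ∀ C ∈ X, C.card % 2 = 1 → ∀ v ∈ C, ∀ S' ⊆ C \ {v},
        oddc R ((C \ {v}) \ S') ≤ S'.card := by
      intro C hC hodd v hv S' hS'
      by_contra hlt
      push_neg at hlt
      have hCU : C ⊆ U := hCsubU C hC
      set Y : Finset V := insert v S' with hY
      have hYC : Y ⊆ C :=
        Finset.insert_subset hv (hS'.trans Finset.sdiff_subset)
      have hCYeq : C \ Y = (C \ {v}) \ S' := by
        ext z
        simp only [hY, Finset.mem_sdiff, Finset.mem_insert, Finset.mem_singleton]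
        tauto
      have hvS' : v ∉ S' :=
        fun h => (Finset.mem_sdiff.1 (hS' h)).2 (Finset.mem_singleton_self v)
      have hYcard : Y.card = S'.card + 1 := Finset.card_insert_of_notMem hvS'
      have hp := oddc_parity hsym (R := R) (C \ Y)
      have hc3 : (C \ Y).card + Y.card = C.card :=
        Finset.card_sdiff_add_card_eq_card hYC
      rw [hCYeq] at hp hc3
      have hge : S'.card + 2 ≤ oddc R ((C \ {v}) \ S') := by omega
      have hYU : Y ⊆ U := hYC.trans hCU
      have hTYW : T ∪ Y ⊆ W := Finset.union_subset hTW (hYU.trans hUsubW)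
      have hWsd : W \ (T ∪ Y) = U \ Y := by
        ext z
        simp only [hU, Finset.mem_sdiff, Finset.mem_union]
        tauto
      have hkey := key C hC Y hYC
      rw [if_pos hodd, hCYeq] at hkey
      have hc2 : (U \ Y).card + Y.card = U.card :=
        Finset.card_sdiff_add_card_eq_card hYU
      have hcard' : (T ∪ Y).card ≤ t := by
        refine hcardT (T ∪ Y) hTYW ?_
        rw [hWsd]
        omega
      have hdisjTY : Disjoint T Y := by
        rw [Finset.disjoint_left]
        intro a ha ha'
        exact (Finset.mem_sdiff.1 (hYU ha')).2 ha
      have : (T ∪ Y).card = t + S'.card + 1 := by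
        rw [Finset.card_union_of_disjoint hdisjTY]
        omega
      omega
    -- even components are strictly smaller than W
    have heven_proper : ∀ C ∈ X, C.card % 2 = 0 → C.card ≤ N := by
      intro C hC heven
      by_cases hT : T = ∅
      · exfalso
        obtain ⟨x, hx⟩ := comps_nonempty hsym hC
        have hCU : C ⊆ U := hCsubU C hC
        have hxU : x ∈ U := hCU hx
        have hkey := key C hC {x} (Finset.singleton_subset_iff.2 hx)
        rw [if_neg (by omega)] at hkey
        have hcx : ({x} : Finset V) ⊆ C := Finset.singleton_subset_iff.2 hx
        have hCxcard : (C \ {x}).card + 1 = C.card := by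
          have := Finset.card_sdiff_add_card_eq_card hcx
          simpa using this
        have hCpos : 0 < C.card := Finset.card_pos.2 ⟨x, hx⟩
        have hp : 1 ≤ oddc R (C \ {x}) :=
          oddc_pos_of_odd hsym (by omega)
        have hxW : x ∈ W := hUsubW hxU
        have hWU : W = U := by rw [hU, hT, Finset.sdiff_empty]
        have hc2 : (U \ {x}).card + 1 = U.card := by
          have := Finset.card_sdiff_add_card_eq_card
            (Finset.singleton_subset_iff.2 hxU)
          simpa using this
        have h1 : ({x} : Finset V).card ≤ t := by
          refine hcardT {x} (Finset.singleton_subset_iff.2 hxW) ?_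
          rw [hWU]
          omega
        rw [Finset.card_singleton, ht, hT] at h1
        simp at h1
      · have htpos : 0 < t := Finset.card_pos.2 (Finset.nonempty_of_ne_empty hT)
        have := Finset.card_le_card (hCsubU C hC)
        omega
    -- Hall's theorem: match most odd components to distinct vertices of T
    set O : Finset (Finset V) := X.filter (fun s => s.card % 2 = 1) with hOdef
    have hOq : O.card = q := by rw [hOdef, hX, hq]; rfl
    set tS : Finset V → Finset V := fun s => T.filter (fun z => ∃ u ∈ s, R u z) with htS
    have htST : ∀ s, tS s ⊆ T := fun s => Finset.filter_subset _ _
    set inlE : V ↪ (V ⊕ Fin d) := ⟨Sum.inl, Sum.inl_injective⟩ with hinlE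
    set inrE : (Fin d) ↪ (V ⊕ Fin d) := ⟨Sum.inr, Sum.inr_injective⟩ with hinrE
    set t' : {s // s ∈ O} → Finset (V ⊕ Fin d) :=
      fun s => ((tS s.1).map inlE) ∪ (Finset.univ.map inrE) with ht'
    have hallCond : ∀ s : Finset {s // s ∈ O}, s.card ≤ (s.biUnion t').card := by
      intro s
      rcases s.eq_empty_or_nonempty with rfl | ⟨c0, hc0⟩
      · simp
      · set T' : Finset V := s.biUnion (fun x => tS x.1) with hT'
        have hT'T : T' ⊆ T := by
          intro z hz
          obtain ⟨x, hx, hzx⟩ := Finset.mem_biUnion.1 hz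
          exact htST _ hzx
        have hT'W : T' ⊆ W := hT'T.trans hTW
        have hUsub' : U ⊆ W \ T' := by
          intro z hz
          exact Finset.mem_sdiff.2 ⟨hUsubW hz,
            fun hzT' => (Finset.mem_sdiff.1 hz).2 (hT'T hzT')⟩
        have hmem : ∀ x : {s // s ∈ O}, x ∈ s →
            x.1 ∈ (comps R (W \ T')).filter (fun c => c.card % 2 = 1) := by
          rintro ⟨C, hCO⟩ hxs
          have hCX : C ∈ X := (Finset.mem_filter.1 hCO).1
          have hodd : C.card % 2 = 1 := (Finset.mem_filter.1 hCO).2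
          rcases (mem_comps hsym).1 hCX with ⟨x0, hx0, hx0eq⟩
          have hcl : ∀ a ∈ comp R U x0, ∀ y ∈ W \ T', R a y → y ∈ comp R U x0 := by
            intro a ha y hy hR
            rcases Finset.mem_sdiff.1 hy with ⟨hyW, hyT'⟩
            by_cases hyT : y ∈ T
            · exfalso
              apply hyT'
              have hmem2 : y ∈ tS C :=
                Finset.mem_filter.2 ⟨hyT, ⟨a, hx0eq ▸ ha, hR⟩⟩
              exact Finset.mem_biUnion.2 ⟨⟨C, hCO⟩, hxs, hmem2⟩
            · exact comp_closed ha (Finset.mem_sdiff.2 ⟨hyW, hyT⟩) hR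
          have heqc := comp_eq_of_closed' hsym hUsub' hx0 hcl
          refine Finset.mem_filter.2 ⟨?_, hodd⟩
          exact (mem_comps hsym).2 ⟨x0, hUsub' hx0, by rw [heqc, hx0eq]⟩
        have hsc : s.card ≤ oddc R (W \ T') := by
          have h1 : s.card = (s.image (fun x => x.1)).card :=
            (Finset.card_image_of_injective s Subtype.val_injective).symm
          rw [h1, oddc]
          apply Finset.card_le_card
          intro c hc
          obtain ⟨x, hx, rfl⟩ := Finset.mem_image.1 hc
          exact hmem x hx
        have hoc := hvalT T' hT'W
        have hc4 : (W \ T').card + T'.card = W.card :=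
          Finset.card_sdiff_add_card_eq_card hT'W
        have hAsub : ((T'.map inlE) ∪ (Finset.univ.map inrE)) ⊆ s.biUnion t' := by
          intro a ha
          rcases Finset.mem_union.1 ha with h | h
          · obtain ⟨z, hz, rfl⟩ := Finset.mem_map.1 h
            obtain ⟨x, hx, hzx⟩ := Finset.mem_biUnion.1 hz
            exact Finset.mem_biUnion.2
              ⟨x, hx, Finset.mem_union_left _ (Finset.mem_map_of_mem _ hzx)⟩
          · exact Finset.mem_biUnion.2 ⟨c0, hc0, Finset.mem_union_right _ h⟩
        have hdisjA : Disjoint (T'.map inlE)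
            (Finset.univ.map inrE : Finset (V ⊕ Fin d)) := by
          rw [Finset.disjoint_left]
          rintro a h1 h2
          obtain ⟨z, _, rfl⟩ := Finset.mem_map.1 h1
          obtain ⟨j, _, hj⟩ := Finset.mem_map.1 h2
          simp [hinlE, hinrE] at hj
        have hAcard : ((T'.map inlE) ∪ (Finset.univ.map inrE)).card = T'.card + d := by
          rw [Finset.card_union_of_disjoint hdisjA, Finset.card_map, Finset.card_map]
          simp
        have hle := Finset.card_le_card hAsub
        omega
    obtain ⟨F, hFinj, hF⟩ :=
      (Finset.all_card_le_biUnion_card_iff_exists_injective t').1 hallCond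
    -- data extracted from the Hall matching
    set zf : Finset V → Finset V := fun C =>
      if h : C ∈ O then (F ⟨C, h⟩).elim (fun z => {z}) (fun _ => ∅) else ∅ with hzf
    have hzf_inl : ∀ (C : Finset V) (h : C ∈ O) (z : V),
        F ⟨C, h⟩ = Sum.inl z → z ∈ tS C := by
      intro C h z hFC
      have hmem := hF ⟨C, h⟩
      rw [hFC, ht'] at hmem
      rcases Finset.mem_union.1 hmem with h' | h'
      · obtain ⟨z', hz', hz'eq⟩ := Finset.mem_map.1 h'
        have : z' = z := by simpa [hinlE] using hz'eq
        exact this ▸ hz'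
      · obtain ⟨j, _, hj⟩ := Finset.mem_map.1 h'
        simp [hinrE] at hj
    have hzf_mem : ∀ (C : Finset V) (a : V), a ∈ zf C →
        ∃ h : C ∈ O, F ⟨C, h⟩ = Sum.inl a := by
      intro C a ha
      simp only [hzf] at ha
      split_ifs at ha with h
      · cases hFC : F ⟨C, h⟩ with
        | inl z =>
            rw [hFC] at ha
            simp only [Sum.elim_inl, Finset.mem_singleton] at ha
            exact ⟨h, ha ▸ hFC⟩
        | inr j =>
            rw [hFC] at ha
            simp at ha
      · simp at ha
    have hzfT : ∀ C, zf C ⊆ T := by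
      intro C z hz
      obtain ⟨h, hFC⟩ := hzf_mem C z hz
      exact htST C (hzf_inl C h z hFC)
    set dom : Finset V → Finset V := fun C => C ∪ zf C with hdom
    set τ : Finset V → ℕ := fun C =>
      if C.card % 2 = 1 then (if zf C = ∅ then C.card - 1 else C.card + 1)
      else C.card with hτ
    have hdomW : ∀ C ∈ X, dom C ⊆ W := fun C hC =>
      Finset.union_subset ((hCsubU C hC).trans hUsubW) ((hzfT C).trans hTW)
    have hTU : ∀ z ∈ T, z ∉ U := fun z hz hzU => (Finset.mem_sdiff.1 hzU).2 hz
    have hdisjdom : ∀ C ∈ X, ∀ C' ∈ X, C ≠ C' → Disjoint (dom C) (dom C') := by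
      intro C hC C' hC' hne
      rw [Finset.disjoint_left]
      intro a ha ha'
      rcases Finset.mem_union.1 ha with h1 | h1 <;>
        rcases Finset.mem_union.1 ha' with h2 | h2
      · exact Finset.disjoint_left.1 (comps_disjoint hsym hC hC' hne) h1 h2
      · exact hTU a (hzfT C' h2) (hCsubU C hC h1)
      · exact hTU a (hzfT C h1) (hCsubU C' hC' h2)
      · obtain ⟨hm1, hF1⟩ := hzf_mem C a h1
        obtain ⟨hm2, hF2⟩ := hzf_mem C' a h2
        have : (⟨C, hm1⟩ : {s // s ∈ O}) = ⟨C', hm2⟩ :=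
          hFinj (hF1.trans hF2.symm)
        exact hne (congrArg Subtype.val this)
    have hex : ∀ C ∈ X, ∃ K φ, K ⊆ dom C ∧ IsM R K φ ∧ τ C ≤ K.card := by
      intro C hC
      have hCU := hCsubU C hC
      by_cases hodd : C.card % 2 = 1
      · by_cases hzfC : zf C = ∅
        · obtain ⟨v, hv⟩ := comps_nonempty hsym hC
          have h2 : (C \ {v}).card + 1 = C.card := by
            have := Finset.card_sdiff_add_card_eq_card
              (Finset.singleton_subset_iff.2 hv)
            simpa using this
          have hcardle : (C \ {v}).card ≤ N := by
            have h1 : C.card ≤ W.card := Finset.card_le_card (hCU.trans hUsubW)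
            omega
          obtain ⟨K, φ, hKsub, hKm, hKc⟩ := ih (C \ {v}) hcardle 0 (by
            intro S' hS'
            simpa using claim_odd C hC hodd v hv S' hS')
          refine ⟨K, φ,
            hKsub.trans (Finset.sdiff_subset.trans Finset.subset_union_left),
            hKm, ?_⟩
          simp only [hτ, if_pos hodd, if_pos hzfC]
          omega
        · obtain ⟨a, ha⟩ := Finset.nonempty_iff_ne_empty.2 hzfC
          obtain ⟨hCO', hFC⟩ := hzf_mem C a ha
          have haT : a ∈ T := hzfT C ha
          have hatS : a ∈ tS C := hzf_inl C hCO' a hFC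
          obtain ⟨u, hu, hRu⟩ := (Finset.mem_filter.1 hatS).2
          have h2 : (C \ {u}).card + 1 = C.card := by
            have := Finset.card_sdiff_add_card_eq_card
              (Finset.singleton_subset_iff.2 hu)
            simpa using this
          have hcardle : (C \ {u}).card ≤ N := by
            have h1 : C.card ≤ W.card := Finset.card_le_card (hCU.trans hUsubW)
            omega
          obtain ⟨K₀, φ₀, hK₀sub, hK₀m, hK₀c⟩ := ih (C \ {u}) hcardle 0 (by
            intro S' hS'
            simpa using claim_odd C hC hodd u hu S' hS')
          have hu_ne_a : u ≠ a := fun h => hTU a haT (hCU (h ▸ hu))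
          have huK₀ : u ∉ K₀ := fun h =>
            (Finset.mem_sdiff.1 (hK₀sub h)).2 (Finset.mem_singleton_self u)
          have haK₀ : a ∉ K₀ := fun h =>
            hTU a haT (hCU (Finset.mem_sdiff.1 (hK₀sub h)).1)
          refine ⟨insert u (insert a K₀),
            fun x => if x = u then a else if x = a then u else φ₀ x, ?_, ?_, ?_⟩
          · intro x hx
            rcases Finset.mem_insert.1 hx with rfl | hx
            · exact Finset.mem_union_left _ hu
            rcases Finset.mem_insert.1 hx with rfl | hx
            · exact Finset.mem_union_right _ ha
            · exact Finset.mem_union_left _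
                (Finset.mem_sdiff.1 (hK₀sub hx)).1
          · intro x hx
            dsimp only
            rcases Finset.mem_insert.1 hx with rfl | hx
            · rw [if_pos rfl]
              refine ⟨Finset.mem_insert_of_mem (Finset.mem_insert_self a _), ?_, hRu⟩
              rw [if_neg hu_ne_a.symm, if_pos rfl]
            rcases Finset.mem_insert.1 hx with rfl | hx
            · rw [if_neg hu_ne_a.symm, if_pos rfl]
              refine ⟨Finset.mem_insert_self u _, ?_, hsym _ _ hRu⟩
              rw [if_pos rfl]
            · have hxu : x ≠ u := fun h => huK₀ (h ▸ hx)
              have hxa : x ≠ a := fun h => haK₀ (h ▸ hx)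
              rw [if_neg hxu, if_neg hxa]
              obtain ⟨hm1, hm2, hm3⟩ := hK₀m x hx
              have hφu : φ₀ x ≠ u := fun h => huK₀ (h ▸ hm1)
              have hφa : φ₀ x ≠ a := fun h => haK₀ (h ▸ hm1)
              refine ⟨Finset.mem_insert_of_mem (Finset.mem_insert_of_mem hm1), ?_, hm3⟩
              rw [if_neg hφu, if_neg hφa, hm2]
          · have hnotm : u ∉ insert a K₀ := by
              simp only [Finset.mem_insert]
              rintro (rfl | h)
              exacts [hu_ne_a rfl, huK₀ h]
            rw [Finset.card_insert_of_notMem hnotm,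
              Finset.card_insert_of_notMem haK₀]
            simp only [hτ, if_pos hodd, if_neg hzfC]
            omega
      · obtain ⟨K, φ, hKsub, hKm, hKc⟩ := ih C (heven_proper C hC (by omega)) 0 (by
          intro S' hS'
          simpa using claim_even C hC (by omega) S' hS')
        exact ⟨K, φ, hKsub.trans Finset.subset_union_left, hKm,
          by simp only [hτ, if_neg hodd]; omega⟩
    obtain ⟨K, φ, hKsub, hKm, hKc⟩ := fold_matching X dom τ hdisjdom hex
    refine ⟨K, φ, ?_, hKm, ?_⟩
    · intro a ha
      obtain ⟨C, hC, haC⟩ := Finset.mem_biUnion.1 (hKsub ha)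
      exact hdomW C hC haC
    · -- final counting
      set Ou : Finset (Finset V) :=
        X.filter (fun C => C.card % 2 = 1 ∧ zf C = ∅) with hOu
      set Om : Finset (Finset V) :=
        X.filter (fun C => C.card % 2 = 1 ∧ ¬zf C = ∅) with hOm
      have hOsplit : Ou.card + Om.card = q := by
        have h1 : Ou = O.filter (fun C => zf C = ∅) := by
          rw [hOu, hOdef, Finset.filter_filter]
        have h2 : Om = O.filter (fun C => ¬zf C = ∅) := by
          rw [hOm, hOdef, Finset.filter_filter]
        rw [h1, h2, Finset.card_filter_add_card_filter_not, hOq]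
      have hcount : ∑ C ∈ X, τ C + Ou.card = (∑ C ∈ X, C.card) + Om.card := by
        rw [hOu, hOm, Finset.card_filter, Finset.card_filter,
          ← Finset.sum_add_distrib, ← Finset.sum_add_distrib]
        apply Finset.sum_congr rfl
        intro C hC
        have hpos : 0 < C.card := Finset.card_pos.2 (comps_nonempty hsym hC)
        simp only [hτ]
        by_cases hodd : C.card % 2 = 1 <;> by_cases hz : zf C = ∅ <;>
          simp [hodd, hz] <;> omega
      have hsumcard : ∑ C ∈ X, C.card = U.card := by
        rw [hX]; exact sum_comps hsym U
      have hOu_le_d : Ou.card ≤ d := by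
        classical
        set g : Finset V → Option (Fin d) := fun C =>
          if h : C ∈ O then (F ⟨C, h⟩).elim (fun _ => none) (fun j => some j)
          else none with hg
        have hmain : ∀ C ∈ Ou, ∃ (h : C ∈ O) (j : Fin d),
            F ⟨C, h⟩ = Sum.inr j ∧ g C = some j := by
          intro C hC
          obtain ⟨hCX, hodd, hze⟩ := Finset.mem_filter.1 hC
          have hCO : C ∈ O := Finset.mem_filter.2 ⟨hCX, hodd⟩
          cases hFC : F ⟨C, hCO⟩ with
          | inl z =>
              exfalso
              have : z ∈ zf C := by
                simp only [hzf, dif_pos hCO, hFC, Sum.elim_inl, Finset.mem_singleton]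
              rw [hze] at this
              simp at this
          | inr j =>
              exact ⟨hCO, j, hFC, by simp only [hg, dif_pos hCO, hFC, Sum.elim_inr]⟩
        have hinj : Set.InjOn g Ou := by
          intro C hC C' hC' hEq
          obtain ⟨h1, j1, hF1, hg1⟩ := hmain C hC
          obtain ⟨h2, j2, hF2, hg2⟩ := hmain C' hC'
          rw [hg1, hg2] at hEq
          have : j1 = j2 := by injection hEq
          have := hFinj (hF1.trans (this ▸ hF2.symm))
          exact congrArg Subtype.val this
        have hmapsto : ∀ C ∈ Ou, g C ∈ (Finset.univ.image (some : Fin d → Option (Fin d))) := by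
          intro C hC
          obtain ⟨h1, j1, hF1, hg1⟩ := hmain C hC
          rw [hg1]
          exact Finset.mem_image.2 ⟨j1, Finset.mem_univ j1, rfl⟩
        have := Finset.card_le_card_of_injOn g hmapsto hinj
        rwa [Finset.card_image_of_injective _ (Option.some_injective _),
          Finset.card_univ, Fintype.card_fin] at this
      omega

end TBaux

open TBaux

theorem stmt_4 {V : Type*} [Fintype V] [DecidableEq V] (G : SimpleGraph V)
    [DecidableRel G.Adj] (A B : Finset V) (hdisj : Disjoint A B)
    (hbip : ∀ v w, G.Adj v w → (v ∈ A ∧ w ∈ B) ∨ (v ∈ B ∧ w ∈ A))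
    (hdegA : ∀ a ∈ A, G.degree a = 3) (hdegB : ∀ b ∈ B, G.degree b = 2) :
    ∃ B' ⊆ B, PDisjNbrs G B' ∧ 5 * B'.card ≥ 2 * A.card := by
  classical
  set R : V → V → Prop := fun x y => x ≠ y ∧ ∃ b ∈ B, G.Adj x b ∧ G.Adj y b with hR
  have hsym : ∀ x y, R x y → R y x := by
    rintro x y ⟨hne, b, hb, h1, h2⟩
    exact ⟨hne.symm, b, hb, h2, h1⟩
  have hABdisj : ∀ x, x ∈ A → x ∈ B → False := by
    intro x hxA hxB
    exact Finset.disjoint_left.1 hdisj hxA hxB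
  have hnbrA : ∀ a ∈ A, G.neighborFinset a = B.filter (fun b => G.Adj a b) := by
    intro a ha
    ext w
    simp only [SimpleGraph.mem_neighborFinset, Finset.mem_filter]
    constructor
    · intro h
      rcases hbip a w h with ⟨_, hw⟩ | ⟨haB, _⟩
      · exact ⟨hw, h⟩
      · exact absurd haB (fun hc => hABdisj a ha hc)
    · exact fun h => h.2
  have hnbrB : ∀ b ∈ B, G.neighborFinset b ⊆ A := by
    intro b hb w hw
    rw [SimpleGraph.mem_neighborFinset] at hw
    rcases hbip b w hw with ⟨hbA, _⟩ | ⟨_, hwA⟩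
    · exact absurd hbA (fun hc => hABdisj b hc hb)
    · exact hwA
  have hcard2 : ∀ b ∈ B, (G.neighborFinset b).card = 2 := fun b hb => hdegB b hb
  have hdegA3 : ∀ a ∈ A, (B.filter (fun b => G.Adj a b)).card = 3 := by
    intro a ha
    rw [← hnbrA a ha]
    exact hdegA a ha
  -- the deficiency bound
  have hdefic : ∀ S ⊆ A, oddc R (A \ S) ≤ S.card + A.card / 5 := by
    intro S hS
    set U : Finset V := A \ S with hU
    set X : Finset (Finset V) := comps R U with hX
    set O : Finset (Finset V) := X.filter (fun s => s.card % 2 = 1) with hO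
    have hq : oddc R (A \ S) = O.card := rfl
    set e : Finset V → Finset V := fun C =>
      B.filter (fun b => (∃ x ∈ C, G.Adj x b) ∧ ∃ z ∈ S, G.Adj z b) with he
    have hUA : U ⊆ A := Finset.sdiff_subset
    have hCsub : ∀ C ∈ X, C ⊆ U := by
      intro C hC
      rcases (mem_comps hsym).1 hC with ⟨x, hx, rfl⟩
      exact comp_subset
    have hident : ∀ C ∈ X, 3 * C.card =
        ∑ b ∈ B, (C.filter (fun x => G.Adj x b)).card := by
      intro C hC
      calc 3 * C.card = ∑ x ∈ C, (B.filter (fun b => G.Adj x b)).card := by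
            rw [Finset.sum_congr rfl (fun x hx => hdegA3 x (hUA (hCsub C hC hx))),
              Finset.sum_const, smul_eq_mul, mul_comm]
        _ = ∑ x ∈ C, ∑ b ∈ B, (if G.Adj x b then 1 else 0) := by
            exact Finset.sum_congr rfl (fun x _ => Finset.card_filter _ _)
        _ = ∑ b ∈ B, ∑ x ∈ C, (if G.Adj x b then 1 else 0) := Finset.sum_comm
        _ = ∑ b ∈ B, (C.filter (fun x => G.Adj x b)).card := by
            exact Finset.sum_congr rfl (fun b _ => (Finset.card_filter _ _).symm)
    have hcnt2 : ∀ C ∈ X, ∀ b ∈ B, (C.filter (fun x => G.Adj x b)).card ≤ 2 := by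
      intro C hC b hb
      rw [← hcard2 b hb]
      apply Finset.card_le_card
      intro x hx
      rw [SimpleGraph.mem_neighborFinset]
      exact G.adj_symm (Finset.mem_filter.1 hx).2
    have hcnt1 : ∀ C ∈ X, ∀ b ∈ B,
        ((C.filter (fun x => G.Adj x b)).card = 1 ↔ b ∈ e C) := by
      intro C hC b hb
      constructor
      · intro h1
        obtain ⟨x, hxeq⟩ := Finset.card_eq_one.1 h1
        have hx : x ∈ C ∧ G.Adj x b := by
          have := Finset.mem_filter.1 (hxeq ▸ Finset.mem_singleton_self x)
          exact ⟨this.1, this.2⟩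
        have hxnb : x ∈ G.neighborFinset b := by
          rw [SimpleGraph.mem_neighborFinset]; exact G.adj_symm hx.2
        obtain ⟨y, hy, hxy⟩ : ∃ y ∈ G.neighborFinset b, y ≠ x := by
          by_contra hcon
          push_neg at hcon
          have hsub : G.neighborFinset b ⊆ {x} := fun z hz => by
            rcases eq_or_ne z x with rfl | hne
            · exact Finset.mem_singleton_self z
            · exact absurd (hcon z hz) (by simpa using hne)
          have := Finset.card_le_card hsub
          rw [hcard2 b hb] at this
          simp at this
        have hyA : y ∈ A := hnbrB b hb hy
        have hyadj : G.Adj y b := by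
          rw [SimpleGraph.mem_neighborFinset] at hy
          exact G.adj_symm hy
        have hyC : y ∉ C := by
          intro hyC
          have : y ∈ C.filter (fun x => G.Adj x b) := Finset.mem_filter.2 ⟨hyC, hyadj⟩
          rw [hxeq] at this
          exact hxy (Finset.mem_singleton.1 this)
        have hyS : y ∈ S := by
          by_contra hyS
          have hyU : y ∈ U := Finset.mem_sdiff.2 ⟨hyA, hyS⟩
          rcases (mem_comps hsym).1 hC with ⟨w, hw, hCeq⟩
          have hxC : x ∈ comp R U w := hCeq ▸ hx.1
          have hyc : y ∈ comp R U w :=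
            comp_closed hxC hyU ⟨fun hc => hxy hc.symm, b, hb, hx.2, hyadj⟩
          exact hyC (hCeq ▸ hyc)
        exact Finset.mem_filter.2 ⟨hb, ⟨x, hx.1, hx.2⟩, ⟨y, hyS, hyadj⟩⟩
      · intro hbe
        obtain ⟨hbB, ⟨x, hxC, hxadj⟩, ⟨z, hzS, hzadj⟩⟩ := Finset.mem_filter.1 hbe
        have hxz : x ≠ z := by
          intro h
          exact (Finset.mem_sdiff.1 (hCsub C hC hxC)).2 (h ▸ hzS)
        have hnbr : G.neighborFinset b = {x, z} := by
          symm
          apply Finset.eq_of_subset_of_card_le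
          · intro w hw
            rcases Finset.mem_insert.1 hw with rfl | hw
            · rw [SimpleGraph.mem_neighborFinset]; exact G.adj_symm hxadj
            · rw [Finset.mem_singleton] at hw
              subst hw
              rw [SimpleGraph.mem_neighborFinset]; exact G.adj_symm hzadj
          · rw [hcard2 b hbB, Finset.card_insert_of_notMem (by simpa using hxz),
              Finset.card_singleton]
        rw [Finset.card_eq_one]
        refine ⟨x, ?_⟩
        ext w
        simp only [Finset.mem_filter, Finset.mem_singleton]
        constructor
        · rintro ⟨hwC, hwadj⟩
          have hwnb : w ∈ G.neighborFinset b := by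
            rw [SimpleGraph.mem_neighborFinset]; exact G.adj_symm hwadj
          rw [hnbr] at hwnb
          rcases Finset.mem_insert.1 hwnb with rfl | h
          · rfl
          · rw [Finset.mem_singleton] at h
            subst h
            exact absurd hzS (Finset.mem_sdiff.1 (hCsub C hC hwC)).2
        · rintro rfl
          exact ⟨hxC, hxadj⟩
    have hfe : ∀ C ∈ X,
        B.filter (fun b => (C.filter (fun x => G.Adj x b)).card = 1) = e C := by
      intro C hC
      ext b
      constructor
      · intro hb
        obtain ⟨hbB, h1⟩ := Finset.mem_filter.1 hb
        exact (hcnt1 C hC b hbB).1 h1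
      · intro hb
        have hbB : b ∈ B := Finset.mem_filter.1 hb |>.1
        exact Finset.mem_filter.2 ⟨hbB, (hcnt1 C hC b hbB).2 hb⟩
    have hecard_odd : ∀ C ∈ O, (e C).card % 2 = 1 := by
      intro C hCO
      obtain ⟨hCX, hodd⟩ := Finset.mem_filter.1 hCO
      have hpar := sum_parity B (fun b => (C.filter (fun x => G.Adj x b)).card)
      have hfe2 : B.filter (fun b => (C.filter (fun x => G.Adj x b)).card % 2 = 1) = e C := by
        rw [← hfe C hCX]
        apply Finset.filter_congr
        intro b hb
        have := hcnt2 C hCX b hb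
        constructor
        · intro h; omega
        · intro h; omega
      rw [hfe2, ← hident C hCX] at hpar
      omega
    have hC1 : ∀ C ∈ O, C.card = 1 → (e C).card = 3 := by
      intro C hCO h1
      obtain ⟨hCX, _⟩ := Finset.mem_filter.1 hCO
      have hsum : ∑ b ∈ B, (C.filter (fun x => G.Adj x b)).card
          = (B.filter (fun b => (C.filter (fun x => G.Adj x b)).card = 1)).card := by
        rw [Finset.card_filter]
        apply Finset.sum_congr rfl
        intro b hb
        have hle : (C.filter (fun x => G.Adj x b)).card ≤ 1 :=
          le_trans (Finset.card_le_card (Finset.filter_subset _ _)) (le_of_eq h1)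
        split_ifs with h
        · exact h
        · omega
      rw [hfe C hCX] at hsum
      have := hident C hCX
      omega
    have hedisj : ∀ C ∈ O, ∀ C' ∈ O, C ≠ C' → Disjoint (e C) (e C') := by
      intro C hC C' hC' hne
      rw [Finset.disjoint_left]
      intro b hb hb'
      obtain ⟨hbB, ⟨x, hxC, hxadj⟩, ⟨z, hzS, hzadj⟩⟩ := Finset.mem_filter.1 hb
      obtain ⟨_, ⟨x', hxC', hxadj'⟩, _⟩ := Finset.mem_filter.1 hb'
      have hCX := (Finset.mem_filter.1 hC).1
      have hCX' := (Finset.mem_filter.1 hC').1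
      have hxx' : x ≠ x' := fun h => Finset.disjoint_left.1
        (comps_disjoint hsym hCX hCX' hne) hxC (h ▸ hxC')
      have hxz : x ≠ z := fun h => (Finset.mem_sdiff.1 (hCsub C hCX hxC)).2 (h ▸ hzS)
      have hx'z : x' ≠ z := fun h => (Finset.mem_sdiff.1 (hCsub C' hCX' hxC')).2 (h ▸ hzS)
      have hsub : ({x, x', z} : Finset V) ⊆ G.neighborFinset b := by
        intro w hw
        rw [SimpleGraph.mem_neighborFinset]
        rcases Finset.mem_insert.1 hw with rfl | hw
        · exact G.adj_symm hxadj
        rcases Finset.mem_insert.1 hw with rfl | hw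
        · exact G.adj_symm hxadj'
        · rw [Finset.mem_singleton] at hw
          subst hw
          exact G.adj_symm hzadj
      have h3 : ({x, x', z} : Finset V).card = 3 := by
        rw [Finset.card_insert_of_notMem (by simp [hxx', hxz]),
          Finset.card_insert_of_notMem (by simpa using hx'z), Finset.card_singleton]
      have := Finset.card_le_card hsub
      rw [hcard2 b hbB, h3] at this
      omega
    have hStotal : ∑ C ∈ O, (e C).card ≤ 3 * S.card := by
      rw [← Finset.card_biUnion hedisj]
      calc (O.biUnion e).card ≤ (S.biUnion (fun z => G.neighborFinset z)).card := by
            apply Finset.card_le_card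
            intro b hb
            obtain ⟨C, hC, hbe⟩ := Finset.mem_biUnion.1 hb
            obtain ⟨hbB, _, ⟨z, hzS, hzadj⟩⟩ := Finset.mem_filter.1 hbe
            exact Finset.mem_biUnion.2 ⟨z, hzS, by
              rw [SimpleGraph.mem_neighborFinset]; exact hzadj⟩
        _ ≤ ∑ z ∈ S, (G.neighborFinset z).card := Finset.card_biUnion_le
        _ = 3 * S.card := by
            have hdeg' : ∑ z ∈ S, (G.neighborFinset z).card = ∑ z ∈ S, 3 :=
              Finset.sum_congr rfl (fun z hz => by
                rw [SimpleGraph.card_neighborFinset_eq_degree]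
                exact hdegA z (hS hz))
            rw [hdeg', Finset.sum_const, smul_eq_mul, mul_comm]
    have hCtotal : ∑ C ∈ O, C.card + S.card ≤ A.card := by
      have h1 : ∑ C ∈ O, C.card ≤ ∑ C ∈ X, C.card :=
        Finset.sum_le_sum_of_subset (Finset.filter_subset _ _)
      have h2 : ∑ C ∈ X, C.card = U.card := by
        rw [hX]; exact sum_comps hsym U
      have h3 : U.card + S.card = A.card := Finset.card_sdiff_add_card_eq_card hS
      omega
    have hper : ∀ C ∈ O, 5 ≤ 2 * (e C).card + C.card := by
      intro C hCO
      have hodd := (Finset.mem_filter.1 hCO).2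
      have h1 := hecard_odd C hCO
      have hpos : 0 < C.card :=
        Finset.card_pos.2 (comps_nonempty hsym (Finset.mem_filter.1 hCO).1)
      rcases Nat.lt_or_ge (e C).card 2 with h | h
      · have hne1 : C.card ≠ 1 := fun hc => by
          have := hC1 C hCO hc
          omega
        omega
      · omega
    have hfinal : 5 * O.card ≤ 5 * S.card + A.card := by
      have h1 : ∑ C ∈ O, (5 : ℕ) ≤ ∑ C ∈ O, (2 * (e C).card + C.card) :=
        Finset.sum_le_sum hper
      rw [Finset.sum_add_distrib, ← Finset.mul_sum, Finset.sum_const, smul_eq_mul,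
        mul_comm] at h1
      omega
    rw [hq]
    omega
  -- apply the Tutte–Berge machinery
  obtain ⟨K, φ, hKA, hKm, hKcard⟩ := tb hsym A.card A (le_refl _) (A.card / 5) hdefic
  set ord := Fintype.equivFin V with hord
  have hφK : ∀ x ∈ K, φ x ∈ K := fun x hx => (hKm x hx).1
  have hφφ : ∀ x ∈ K, φ (φ x) = x := fun x hx => (hKm x hx).2.1
  have hφne : ∀ x ∈ K, x ≠ φ x := fun x hx => (hKm x hx).2.2.1
  set K' : Finset V := K.filter (fun x => ord x < ord (φ x)) with hK'
  have hK'K : K' ⊆ K := Finset.filter_subset _ _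
  have habs : ∀ x ∈ K', ∀ y ∈ K', x = φ y → False := by
    intro x hx y hy hEq
    have e1 := (Finset.mem_filter.1 hx).2
    have e2 := (Finset.mem_filter.1 hy).2
    rw [hEq, hφφ y (hK'K hy)] at e1
    exact absurd (e1.trans e2) (lt_irrefl _)
  have hKsplit : K = K' ∪ K'.image φ := by
    ext x
    constructor
    · intro hx
      have hne : ord x ≠ ord (φ x) := fun h => hφne x hx (ord.injective h)
      rcases lt_or_gt_of_ne hne with h | h
      · exact Finset.mem_union_left _ (Finset.mem_filter.2 ⟨hx, h⟩)
      · have hφx : φ x ∈ K' := by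
          refine Finset.mem_filter.2 ⟨hφK x hx, ?_⟩
          rw [hφφ x hx]
          exact h
        refine Finset.mem_union_right _ (Finset.mem_image.2 ⟨φ x, hφx, hφφ x hx⟩)
    · intro hx
      rcases Finset.mem_union.1 hx with h | h
      · exact hK'K h
      · obtain ⟨y, hy, rfl⟩ := Finset.mem_image.1 h
        exact hφK y (hK'K hy)
  have hdisjK : Disjoint K' (K'.image φ) := by
    rw [Finset.disjoint_left]
    intro x hx hx'
    obtain ⟨y, hy, hEq⟩ := Finset.mem_image.1 hx'
    exact habs x hx y hy hEq.symm
  have hinjφ : Set.InjOn φ K' := by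
    intro x hx y hy hEq
    have := congrArg φ hEq
    rw [hφφ x (hK'K hx), hφφ y (hK'K hy)] at this
    exact this
  have hKcard2 : K.card = 2 * K'.card := by
    rw [hKsplit, Finset.card_union_of_disjoint hdisjK, Finset.card_image_of_injOn hinjφ]
    omega
  have hexb : ∀ x, x ∈ K' → ∃ b, b ∈ B ∧ G.Adj x b ∧ G.Adj (φ x) b := by
    intro x hx
    obtain ⟨hne, b, hb, h1, h2⟩ := (hKm x (hK'K hx)).2.2
    exact ⟨b, hb, h1, h2⟩
  set bsel : V → V := fun x => if h : x ∈ K' then (hexb x h).choose else x with hbsel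
  have hbsel_spec : ∀ x ∈ K', bsel x ∈ B ∧ G.Adj x (bsel x) ∧ G.Adj (φ x) (bsel x) := by
    intro x hx
    simp only [hbsel, dif_pos hx]
    exact (hexb x hx).choose_spec
  have hbnbr : ∀ x ∈ K', G.neighborFinset (bsel x) = {x, φ x} := by
    intro x hx
    obtain ⟨hbB, h1, h2⟩ := hbsel_spec x hx
    have hxne : x ≠ φ x := hφne x (hK'K hx)
    symm
    apply Finset.eq_of_subset_of_card_le
    · intro w hw
      rcases Finset.mem_insert.1 hw with rfl | hw
      · rw [SimpleGraph.mem_neighborFinset]; exact G.adj_symm h1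
      · rw [Finset.mem_singleton] at hw
        subst hw
        rw [SimpleGraph.mem_neighborFinset]; exact G.adj_symm h2
    · rw [hcard2 _ hbB, Finset.card_insert_of_notMem (by simpa using hxne),
        Finset.card_singleton]
  set B' : Finset V := K'.image bsel with hB'
  have hpairdisj : ∀ x ∈ K', ∀ y ∈ K', x ≠ y → ∀ a,
      a ∈ ({x, φ x} : Finset V) → a ∈ ({y, φ y} : Finset V) → False := by
    intro x hx y hy hxy a ha1 ha2
    rcases Finset.mem_insert.1 ha1 with rfl | ha1 <;>
      [skip; rw [Finset.mem_singleton] at ha1]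
    · rcases Finset.mem_insert.1 ha2 with h | h
      · exact hxy h
      · rw [Finset.mem_singleton] at h
        exact habs a hx y hy h
    · subst ha1
      rcases Finset.mem_insert.1 ha2 with h | h
      · exact habs y hy x hx h.symm
      · rw [Finset.mem_singleton] at h
        exact hxy (hinjφ hx hy h)
  have hinj_bsel : Set.InjOn bsel K' := by
    intro x hx y hy hEq
    by_contra hxy
    have h1 := hbnbr x hx
    have h2 := hbnbr y hy
    rw [hEq, h2] at h1
    exact hpairdisj x hx y hy hxy x (Finset.mem_insert_self x _)
      (h1 ▸ Finset.mem_insert_self x _)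
  refine ⟨B', ?_, ?_, ?_⟩
  · intro b hb
    obtain ⟨x, hx, rfl⟩ := Finset.mem_image.1 hb
    exact (hbsel_spec x hx).1
  · intro b₁ hb₁ b₂ hb₂ hne a ha
    obtain ⟨x, hx, rfl⟩ := Finset.mem_image.1 hb₁
    obtain ⟨y, hy, rfl⟩ := Finset.mem_image.1 hb₂
    have hxy : x ≠ y := fun h => hne (h ▸ rfl)
    have ha1 : a ∈ ({x, φ x} : Finset V) := by
      rw [← hbnbr x hx, SimpleGraph.mem_neighborFinset]
      exact G.adj_symm ha.1
    have ha2 : a ∈ ({y, φ y} : Finset V) := by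
      rw [← hbnbr y hy, SimpleGraph.mem_neighborFinset]
      exact G.adj_symm ha.2
    exact hpairdisj x hx y hy hxy a ha1 ha2
  · have hB'card : B'.card = K'.card := Finset.card_image_of_injOn hinj_bsel
    have hdiv : 5 * (A.card / 5) ≤ A.card := by omega
    omega
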